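/- For any d ≥ 3 and any two distinct feature indices i ≠ j in [d], the sum over all subsets S of [d] with 1 ≤ |S| ≤ d−1 containing both i and j of k(S) = (d−1)/(binom(d,|S|)·|S|·(d−|S|)) equals ((d−1)·H_{d−2} − (d−2))/d. -/

import Mathlib

open Finset

/-- Nat-level binomial identity: `d(d-1)C(d-2,t) = (t+2)(t+1)C(d,t+2)`. -/
lemma aux_choose (d t : ℕ) (h : t + 2 ≤ d) :
    d * ((d - 1) * (d - 2).choose t) = (t + 2) * ((t + 1) * d.choose (t + 2)) := by
  have h1 : (d - 2) + 1 = d - 1 := by omega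
  have h2 : (d - 1) + 1 = d := by omega
  have e1 := Nat.add_one_mul_choose_eq (d - 2) t
  have e2 := Nat.add_one_mul_choose_eq (d - 1) (t + 1)
  rw [h1] at e1
  rw [h2] at e2
  calc d * ((d - 1) * (d - 2).choose t) = d * ((d - 1).choose (t + 1) * (t + 1)) := by rw [e1]
    _ = (d * (d - 1).choose (t + 1)) * (t + 1) := by ring
    _ = (d.choose (t + 2) * (t + 2)) * (t + 1) := by rw [e2]
    _ = (t + 2) * ((t + 1) * d.choose (t + 2)) := by ring

/-- Real-valued term simplification. -/
lemma aux_term (d t : ℕ) (ht : t + 2 ≤ d - 1) (hd : 3 ≤ d) :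
    ((d - 2).choose t : ℝ) *
      (((d : ℝ) - 1) / ((d.choose (t + 2) : ℝ) * ((t : ℝ) + 2) * ((d : ℝ) - ((t : ℝ) + 2))))
      = ((t : ℝ) + 1) / ((d : ℝ) * ((d : ℝ) - 2 - (t : ℝ))) := by
  have hle : t + 2 ≤ d := by omega
  have hch : (0 : ℝ) < (d.choose (t + 2) : ℝ) := by
    exact_mod_cast Nat.choose_pos hle
  have hdt : (t : ℝ) + 2 < (d : ℝ) := by
    have : t + 2 < d := by omega
    exact_mod_cast this
  have hd0 : (0 : ℝ) < (d : ℝ) := by positivity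
  have key : (d : ℝ) * (((d : ℝ) - 1) * ((d - 2).choose t : ℝ))
      = ((t : ℝ) + 2) * (((t : ℝ) + 1) * (d.choose (t + 2) : ℝ)) := by
    have := aux_choose d t hle
    have h1 : ((d : ℝ) - 1) = ((d - 1 : ℕ) : ℝ) := by
      have : 1 ≤ d := by omega
      push_cast [this]; ring
    rw [h1]
    exact_mod_cast this
  have hD1 : (0 : ℝ) < (d.choose (t + 2) : ℝ) * ((t : ℝ) + 2) * ((d : ℝ) - ((t : ℝ) + 2)) := by
    apply mul_pos (mul_pos hch (by positivity))
    linarith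
  have hD2 : (0 : ℝ) < (d : ℝ) * ((d : ℝ) - 2 - (t : ℝ)) := by
    apply mul_pos hd0
    linarith
  rw [mul_div_assoc', div_eq_div_iff (ne_of_gt hD1) (ne_of_gt hD2)]
  linear_combination ((d : ℝ) - 2 - (t : ℝ)) * key

/-- Final reindexed sum. -/
lemma aux_sum (n : ℕ) :
    ∑ t ∈ Finset.range n, ((t : ℝ) + 1) / ((n : ℝ) - (t : ℝ))
      = ((n : ℝ) + 1) * (∑ k ∈ Finset.Icc 1 n, (1 : ℝ) / (k : ℝ)) - (n : ℝ) := by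
  have step : ∑ t ∈ Finset.range n, ((t : ℝ) + 1) / ((n : ℝ) - (t : ℝ))
      = ∑ k ∈ Finset.Icc 1 n, (((n : ℝ) + 1) / (k : ℝ) - 1) := by
    refine Finset.sum_nbij' (fun t => n - t) (fun k => n - k) ?_ ?_ ?_ ?_ ?_
    · intro t ht
      simp only [Finset.mem_range] at ht
      simp only [Finset.mem_Icc]
      omega
    · intro k hk
      simp only [Finset.mem_Icc] at hk
      simp only [Finset.mem_range]
      omega
    · intro t ht
      simp only [Finset.mem_range] at ht
      show n - (n - t) = t
      omega
    · intro k hk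
      simp only [Finset.mem_Icc] at hk
      show n - (n - k) = k
      omega
    · intro t ht
      simp only [Finset.mem_range] at ht
      have h1 : ((n - t : ℕ) : ℝ) = (n : ℝ) - (t : ℝ) := by
        have : t ≤ n := by omega
        push_cast [this]; ring
      rw [h1]
      have h2 : (n : ℝ) - (t : ℝ) ≠ 0 := by
        have : (t : ℝ) < (n : ℝ) := by exact_mod_cast ht
        linarith
      field_simp
      ring
  rw [step, Finset.sum_sub_distrib, Finset.mul_sum]
  have hc : (Finset.Icc 1 n).card = n := by simp
  rw [Finset.sum_const, hc]
  congr 1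
  · exact Finset.sum_congr rfl (fun k _ => by field_simp)
  · simp

/-- For any `d ≥ 3` and distinct `i ≠ j`, the sum over all subsets `S` of `[d]` with
`1 ≤ |S| ≤ d-1` containing both `i` and `j` of `k(S) = (d-1)/(C(d,|S|)·|S|·(d-|S|))`
equals `((d-1)·H_{d-2} - (d-2))/d`. -/
theorem stmt_1 (d : ℕ) (hd : 3 ≤ d) (i j : Fin d) (hij : i ≠ j) :
    ∑ S ∈ Finset.univ.filter
        (fun S : Finset (Fin d) => i ∈ S ∧ j ∈ S ∧ 1 ≤ S.card ∧ S.card ≤ d - 1),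
      ((d : ℝ) - 1) / ((d.choose S.card : ℝ) * (S.card : ℝ) * ((d : ℝ) - (S.card : ℝ)))
      = (((d : ℝ) - 1) * (∑ k ∈ Finset.Icc 1 (d - 2), (1 : ℝ) / (k : ℝ)) - ((d : ℝ) - 2))
          / (d : ℝ) := by
  classical
  set U : Finset (Fin d) := Finset.univ \ {i, j} with hU
  have hUcard : U.card = d - 2 := by
    rw [hU, Finset.card_sdiff_of_subset (by simp)]
    simp [Finset.card_insert_of_notMem, hij]
  have hij2 : ({i, j} : Finset (Fin d)).card = 2 := by
    rw [Finset.card_insert_of_notMem (by simp [hij]), Finset.card_singleton]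
  -- Step 1: biject with subsets T of U with card ≤ d - 3
  have step1 : ∑ S ∈ Finset.univ.filter
        (fun S : Finset (Fin d) => i ∈ S ∧ j ∈ S ∧ 1 ≤ S.card ∧ S.card ≤ d - 1),
      ((d : ℝ) - 1) / ((d.choose S.card : ℝ) * (S.card : ℝ) * ((d : ℝ) - (S.card : ℝ)))
      = ∑ T ∈ U.powerset.filter (fun T => T.card ≤ d - 3),
      ((d : ℝ) - 1) / ((d.choose (T.card + 2) : ℝ) * ((T.card : ℝ) + 2) *
        ((d : ℝ) - ((T.card : ℝ) + 2))) := by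
    refine Finset.sum_nbij' (fun S => S \ {i, j}) (fun T => insert i (insert j T)) ?_ ?_ ?_ ?_ ?_
    · intro S hS
      simp only [Finset.mem_filter, Finset.mem_univ, true_and] at hS
      obtain ⟨hi, hj, _, hle⟩ := hS
      have hsub : ({i, j} : Finset (Fin d)) ⊆ S := by
        intro x hx; simp only [Finset.mem_insert, Finset.mem_singleton] at hx
        rcases hx with rfl | rfl <;> assumption
      have hcard : (S \ {i, j}).card = S.card - 2 := by
        rw [Finset.card_sdiff_of_subset hsub, hij2]
      simp only [Finset.mem_filter, Finset.mem_powerset]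
      constructor
      · intro x hx
        rw [hU, Finset.mem_sdiff]
        exact ⟨Finset.mem_univ x, (Finset.mem_sdiff.mp hx).2⟩
      · rw [hcard]; omega
    · intro T hT
      simp only [Finset.mem_filter, Finset.mem_powerset, hU] at hT
      obtain ⟨hTsub, hTle⟩ := hT
      have hiT : i ∉ T := fun h => by simpa using (hTsub h)
      have hjT : j ∉ T := fun h => by simpa using (hTsub h)
      have hcard : (insert i (insert j T)).card = T.card + 2 := by
        rw [Finset.card_insert_of_notMem (by simp [hiT, hij]),
          Finset.card_insert_of_notMem hjT]
      simp only [Finset.mem_filter, Finset.mem_univ, true_and]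
      refine ⟨Finset.mem_insert_self i _,
        Finset.mem_insert_of_mem (Finset.mem_insert_self j T), ?_, ?_⟩ <;> rw [hcard] <;> omega
    · intro S hS
      simp only [Finset.mem_filter, Finset.mem_univ, true_and] at hS
      obtain ⟨hi, hj, _, _⟩ := hS
      ext x
      simp only [Finset.mem_insert, Finset.mem_sdiff, Finset.mem_singleton]
      constructor
      · rintro (rfl | rfl | ⟨hx, _⟩) <;> assumption
      · intro hx
        by_cases h1 : x = i
        · exact Or.inl h1
        by_cases h2 : x = j
        · exact Or.inr (Or.inl h2)
        · exact Or.inr (Or.inr ⟨hx, by simp [h1, h2]⟩)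
    · intro T hT
      simp only [Finset.mem_filter, Finset.mem_powerset, hU] at hT
      obtain ⟨hTsub, _⟩ := hT
      have hiT : i ∉ T := fun h => by simpa using (hTsub h)
      have hjT : j ∉ T := fun h => by simpa using (hTsub h)
      ext x
      simp only [Finset.mem_sdiff, Finset.mem_insert, Finset.mem_singleton]
      constructor
      · rintro ⟨rfl | rfl | hx, hne⟩
        · exact absurd (Or.inl rfl) hne
        · exact absurd (Or.inr rfl) hne
        · exact hx
      · intro hx
        exact ⟨Or.inr (Or.inr hx), by rintro (rfl | rfl) <;> [exact hiT hx; exact hjT hx]⟩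
    · intro S hS
      simp only [Finset.mem_filter, Finset.mem_univ, true_and] at hS
      obtain ⟨hi, hj, _, _⟩ := hS
      have hsub : ({i, j} : Finset (Fin d)) ⊆ S := by
        intro x hx; simp only [Finset.mem_insert, Finset.mem_singleton] at hx
        rcases hx with rfl | rfl <;> assumption
      have h2S : 2 ≤ S.card := by
        calc 2 = ({i, j} : Finset (Fin d)).card := hij2.symm
          _ ≤ S.card := Finset.card_le_card hsub
      have hcard : (S \ {i, j}).card + 2 = S.card := by
        rw [Finset.card_sdiff_of_subset hsub, hij2]; omega
      rw [hcard]
      congr 1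
      have : ((S \ {i, j}).card : ℝ) + 2 = (S.card : ℝ) := by
        exact_mod_cast hcard
      rw [this]
  rw [step1]
  -- Step 2: decompose by cardinality
  have step2 : U.powerset.filter (fun T => T.card ≤ d - 3)
      = (Finset.range (d - 2)).biUnion (fun t => U.powersetCard t) := by
    ext T
    simp only [Finset.mem_filter, Finset.mem_powerset, Finset.mem_biUnion, Finset.mem_range,
      Finset.mem_powersetCard]
    constructor
    · rintro ⟨hsub, hle⟩
      exact ⟨T.card, by omega, hsub, rfl⟩
    · rintro ⟨t, ht, hsub, rfl⟩
      exact ⟨hsub, by omega⟩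
  rw [step2, Finset.sum_biUnion]
  swap
  · intro a _ b _ hab
    simp only [Function.onFun]
    rw [Finset.disjoint_left]
    intro T hTa hTb
    rw [Finset.mem_powersetCard] at hTa hTb
    exact hab (hTa.2 ▸ hTb.2.symm ▸ rfl)
  -- Step 3: evaluate inner sums
  have step3 : ∀ t ∈ Finset.range (d - 2),
      (∑ T ∈ U.powersetCard t,
        ((d : ℝ) - 1) / ((d.choose (T.card + 2) : ℝ) * ((T.card : ℝ) + 2) *
          ((d : ℝ) - ((T.card : ℝ) + 2))))
      = ((t : ℝ) + 1) / ((d : ℝ) * ((d : ℝ) - 2 - (t : ℝ))) := by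
    intro t ht
    simp only [Finset.mem_range] at ht
    have hconst : ∀ T ∈ U.powersetCard t,
        ((d : ℝ) - 1) / ((d.choose (T.card + 2) : ℝ) * ((T.card : ℝ) + 2) *
          ((d : ℝ) - ((T.card : ℝ) + 2)))
        = ((d : ℝ) - 1) / ((d.choose (t + 2) : ℝ) * ((t : ℝ) + 2) *
          ((d : ℝ) - ((t : ℝ) + 2))) := by
      intro T hT
      rw [Finset.mem_powersetCard] at hT
      rw [hT.2]
    rw [Finset.sum_congr rfl hconst, Finset.sum_const, Finset.card_powersetCard, hUcard,
      nsmul_eq_mul]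
    exact aux_term d t (by omega) hd
  rw [Finset.sum_congr rfl step3]
  -- Step 4: compute the final sum
  have hd2 : ((d - 2 : ℕ) : ℝ) = (d : ℝ) - 2 := by
    have : 2 ≤ d := by omega
    push_cast [this]; ring
  have step4 : ∑ t ∈ Finset.range (d - 2), ((t : ℝ) + 1) / ((d : ℝ) * ((d : ℝ) - 2 - (t : ℝ)))
      = (1 / (d : ℝ)) * ∑ t ∈ Finset.range (d - 2),
          ((t : ℝ) + 1) / (((d - 2 : ℕ) : ℝ) - (t : ℝ)) := by
    rw [Finset.mul_sum]
    refine Finset.sum_congr rfl (fun t ht => ?_)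
    simp only [Finset.mem_range] at ht
    have h1 : (d : ℝ) ≠ 0 := by positivity
    have h2 : (d : ℝ) - 2 - (t : ℝ) ≠ 0 := by
      have : (t : ℝ) < ((d - 2 : ℕ) : ℝ) := by exact_mod_cast ht
      rw [hd2] at this
      linarith
    rw [hd2]
    field_simp
    try ring
  rw [step4, aux_sum (d - 2), hd2]
  try ring
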